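/- Let q be a real number with 0 < q < 1, and for each m ∈ ℕ set τ_m := ∑_{k=0}^{m} binom_q(m,k) (that is, τ_m = (1 ⊕_q 1)^m). Then for every complex x with |x| < 1/(1−q), the series cos_q((1 ⊕_q 1)x) := ∑_{n=0}^{∞} (−1)^n τ_{2n} x^{2n}/[2n]_q! converges and cos_q(x)² − sin_q(x)² = cos_q((1 ⊕_q 1)x). -/

import Mathlib

open Filter Topology

/-- The `q`-basic number `[n]_q = (1 - q^n)/(1 - q)`. -/
noncomputable def qNum (q : ℝ) (n : ℕ) : ℝ := (1 - q ^ n) / (1 - q)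

/-- The `q`-factorial `[n]_q! = [1]_q [2]_q ⋯ [n]_q`, with `[0]_q! = 1`. -/
noncomputable def qFact (q : ℝ) (n : ℕ) : ℝ := ∏ j ∈ Finset.range n, qNum q (j + 1)

/-- The Gaussian binomial coefficient `[n]_q! / ([k]_q! [n-k]_q!)`. -/
noncomputable def qBinom (q : ℝ) (n k : ℕ) : ℝ := qFact q n / (qFact q k * qFact q (n - k))

/-- The `q`-exponential `e_q(z) = ∑ z^n / [n]_q!`. -/
noncomputable def qExp (q : ℝ) (z : ℂ) : ℂ := ∑' n : ℕ, z ^ n / (qFact q n : ℂ)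

/-- The `q`-sine `sin_q(z) = ∑ (-1)^n z^(2n+1) / [2n+1]_q!`. -/
noncomputable def qSin (q : ℝ) (z : ℂ) : ℂ :=
  ∑' n : ℕ, (-1 : ℂ) ^ n * z ^ (2 * n + 1) / (qFact q (2 * n + 1) : ℂ)

/-- The `q`-cosine `cos_q(z) = ∑ (-1)^n z^(2n) / [2n]_q!`. -/
noncomputable def qCos (q : ℝ) (z : ℂ) : ℂ :=
  ∑' n : ℕ, (-1 : ℂ) ^ n * z ^ (2 * n) / (qFact q (2 * n) : ℂ)

/-- The `q`-addition power `(x ⊕_q y)^n = ∑_{k=0}^n binom_q(n,k) x^k y^(n-k)`. -/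
noncomputable def qAddPow (q : ℝ) (x y : ℂ) (n : ℕ) : ℂ :=
  ∑ k ∈ Finset.range (n + 1), (qBinom q n k : ℂ) * x ^ k * y ^ (n - k)

/-- The `q`-subtraction power `(x ⊖_q y)^n = ∑_{k=0}^n binom_q(n,k) (-1)^(n-k) x^k y^(n-k)`. -/
noncomputable def qSubPow (q : ℝ) (x y : ℂ) (n : ℕ) : ℂ :=
  ∑ k ∈ Finset.range (n + 1), (qBinom q n k : ℂ) * (-1 : ℂ) ^ (n - k) * x ^ k * y ^ (n - k)

/-- The `q`-tangent `tan_q(z) = sin_q(z)/cos_q(z)`. -/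
noncomputable def qTan (q : ℝ) (z : ℂ) : ℂ := qSin q z / qCos q z

/-- The second `q`-exponential `E_q(z) = ∑ q^(n(n-1)/2) z^n / [n]_q!`. -/
noncomputable def qExpE (q : ℝ) (z : ℂ) : ℂ :=
  ∑' n : ℕ, (q : ℂ) ^ (n * (n - 1) / 2) * z ^ n / (qFact q n : ℂ)
section QAux

lemma qNum_pos {q : ℝ} (hq0 : 0 < q) (hq1 : q < 1) (n : ℕ) : 0 < qNum q (n + 1) := by
  have h1 : q ^ (n + 1) < 1 := pow_lt_one₀ hq0.le hq1 (Nat.succ_ne_zero n)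
  exact div_pos (by linarith) (by linarith)

lemma qFact_pos {q : ℝ} (hq0 : 0 < q) (hq1 : q < 1) (n : ℕ) : 0 < qFact q n :=
  Finset.prod_pos fun j _ => qNum_pos hq0 hq1 j

lemma qFact_succ (q : ℝ) (n : ℕ) : qFact q (n + 1) = qFact q n * qNum q (n + 1) :=
  Finset.prod_range_succ _ _

lemma qNum_tendsto {q : ℝ} (hq0 : 0 < q) (hq1 : q < 1) :
    Filter.Tendsto (fun n => qNum q n) Filter.atTop (nhds (1 / (1 - q))) := by
  have h := tendsto_pow_atTop_nhds_zero_of_lt_one hq0.le hq1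
  have h2 := (Filter.Tendsto.sub (tendsto_const_nhds (x := (1 : ℝ))) h).div_const (1 - q)
  simpa [qNum] using h2

/-- absolute summability of the shifted `q`-trig series -/
lemma qtrig_summable_norm {q : ℝ} (hq0 : 0 < q) (hq1 : q < 1) (x : ℂ)
    (hx : ‖x‖ < 1 / (1 - q)) (m0 : ℕ) :
    Summable fun n : ℕ => ‖(-1 : ℂ) ^ n * x ^ (2 * n + m0) / (qFact q (2 * n + m0) : ℂ)‖ := by
  have h1q : (0 : ℝ) < 1 - q := by linarith
  set A := ‖x‖ with hA
  have hA0 : 0 ≤ A := norm_nonneg x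
  have hs : A * (1 - q) < 1 := by
    rw [lt_div_iff₀ h1q] at hx; linarith
  set r : ℝ := ((A * (1 - q)) ^ 2 + 1) / 2 with hr
  have hs2 : (A * (1 - q)) ^ 2 < 1 := by nlinarith [mul_nonneg hA0 h1q.le]
  have hr1 : r < 1 := by rw [hr]; linarith
  have hr0 : 0 < r := by positivity
  have hA2r : A ^ 2 < r * (1 / (1 - q) * (1 / (1 - q))) := by
    have hEq : A ^ 2 = (A * (1 - q)) ^ 2 * (1 / (1 - q) * (1 / (1 - q))) := by
      field_simp
    rw [hEq]
    have hpos : 0 < 1 / (1 - q) * (1 / (1 - q)) := by positivity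
    exact mul_lt_mul_of_pos_right (by linarith) hpos
  -- eventual bound
  have htend : Filter.Tendsto
      (fun m : ℕ => r * (qNum q (m + 1) * qNum q (m + 2))) Filter.atTop
      (nhds (r * (1 / (1 - q) * (1 / (1 - q))))) := by
    have h1 : Filter.Tendsto (fun m : ℕ => qNum q (m + 1)) Filter.atTop
        (nhds (1 / (1 - q))) := (qNum_tendsto hq0 hq1).comp (Filter.tendsto_add_atTop_nat 1)
    have h2 : Filter.Tendsto (fun m : ℕ => qNum q (m + 2)) Filter.atTop
        (nhds (1 / (1 - q))) := (qNum_tendsto hq0 hq1).comp (Filter.tendsto_add_atTop_nat 2)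
    exact Filter.Tendsto.const_mul r (h1.mul h2)
  have hev : ∀ᶠ m in Filter.atTop, A ^ 2 < r * (qNum q (m + 1) * qNum q (m + 2)) :=
    htend.eventually_const_lt hA2r
  obtain ⟨N, hN⟩ := Filter.eventually_atTop.mp hev
  have hnorm : ∀ e : ℕ, ∀ n : ℕ,
      ‖(-1 : ℂ) ^ n * x ^ e / (qFact q e : ℂ)‖ = A ^ e / qFact q e := by
    intro e n
    rw [norm_div, norm_mul, norm_pow, norm_pow]
    simp [abs_of_pos (qFact_pos hq0 hq1 e), hA]
  apply summable_of_ratio_norm_eventually_le hr1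
  filter_upwards [Filter.eventually_ge_atTop N] with n hn
  have hmN : N ≤ 2 * n + m0 := by omega
  have hb := hN (2 * n + m0) hmN
  set m := 2 * n + m0 with hm
  have he : 2 * (n + 1) + m0 = m + 1 + 1 := by omega
  have hfnn : (0:ℝ) ≤ ‖(-1 : ℂ) ^ (n+1) * x ^ (2 * (n+1) + m0) / (qFact q (2 * (n+1) + m0) : ℂ)‖ :=
    norm_nonneg _
  rw [Real.norm_of_nonneg (norm_nonneg _), Real.norm_of_nonneg (norm_nonneg _),
    hnorm _ _, hnorm _ _, he, qFact_succ, qFact_succ]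
  have hF : 0 < qFact q m := qFact_pos hq0 hq1 m
  have hu : 0 < qNum q (m + 1) := qNum_pos hq0 hq1 m
  have hv : 0 < qNum q (m + 2) := qNum_pos hq0 hq1 (m + 1)
  rw [← mul_div_assoc, div_le_div_iff₀ (by positivity) (by positivity)]
  have hpow : A ^ (m + 1 + 1) = A ^ m * A ^ 2 := by ring
  rw [hpow]
  calc A ^ m * A ^ 2 * qFact q m
      = A ^ 2 * (A ^ m * qFact q m) := by ring
    _ ≤ (r * (qNum q (m + 1) * qNum q (m + 2))) * (A ^ m * qFact q m) := by
        apply mul_le_mul_of_nonneg_right hb.le (by positivity)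
    _ = r * A ^ m * (qFact q m * qNum q (m + 1) * qNum q (m + 2)) := by ring

lemma qFact_ne_zero' {q : ℝ} (hq0 : 0 < q) (hq1 : q < 1) (n : ℕ) :
    ((qFact q n : ℝ) : ℂ) ≠ 0 := by
  exact_mod_cast (qFact_pos hq0 hq1 n).ne'

lemma qBinom_div_cast {q : ℝ} (hq0 : 0 < q) (hq1 : q < 1) (n k : ℕ) :
    ((qBinom q n k : ℝ) : ℂ) / (qFact q n : ℂ) =
      1 / ((qFact q k : ℂ) * (qFact q (n - k) : ℂ)) := by
  have h1 := qFact_ne_zero' hq0 hq1 n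
  have h2 := qFact_ne_zero' hq0 hq1 k
  have h3 := qFact_ne_zero' hq0 hq1 (n - k)
  rw [qBinom]
  push_cast
  field_simp

lemma sum_range_even_odd (f : ℕ → ℂ) (n : ℕ) :
    ∑ k ∈ Finset.range (2 * n + 1), f k =
      (∑ i ∈ Finset.range (n + 1), f (2 * i)) + ∑ i ∈ Finset.range n, f (2 * i + 1) := by
  induction n with
  | zero => simp
  | succ m ih =>
    have e1 : ∑ k ∈ Finset.range ((2 * m + 1) + 1 + 1), f k =
        (∑ k ∈ Finset.range (2 * m + 1), f k) + f (2 * m + 1) + f (2 * m + 2) := by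
      rw [Finset.sum_range_succ, Finset.sum_range_succ]
    rw [show 2 * (m + 1) + 1 = (2 * m + 1) + 1 + 1 from by omega, e1, ih,
      Finset.sum_range_succ (fun i => f (2 * i)) (m + 1),
      Finset.sum_range_succ (fun i => f (2 * i + 1)) m,
      show 2 * (m + 1) = 2 * m + 2 from by omega]
    ring

end QAux

/-- `cos_q(x)² - sin_q(x)² = cos_q((1 ⊕_q 1) x)`, where the right-hand series is
`∑ (-1)^n (1 ⊕_q 1)^{2n} x^{2n} / [2n]_q!`. -/
theorem qCos_sq_sub_qSin_sq (q : ℝ) (hq0 : 0 < q) (hq1 : q < 1) (x : ℂ)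
    (hx : ‖x‖ < 1 / (1 - q)) :
    HasSum
      (fun n : ℕ => (-1 : ℂ) ^ n * qAddPow q 1 1 (2 * n) * x ^ (2 * n) / (qFact q (2 * n) : ℂ))
      (qCos q x ^ 2 - qSin q x ^ 2) := by
  classical
  set a : ℕ → ℂ := fun n => (-1 : ℂ) ^ n * x ^ (2 * n) / (qFact q (2 * n) : ℂ) with ha_def
  set b : ℕ → ℂ := fun n => (-1 : ℂ) ^ n * x ^ (2 * n + 1) / (qFact q (2 * n + 1) : ℂ) with hb_def
  have hsa : Summable fun n => ‖a n‖ := by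
    have h := qtrig_summable_norm hq0 hq1 x hx 0
    simpa [ha_def] using h
  have hsb : Summable fun n => ‖b n‖ := by
    have h := qtrig_summable_norm hq0 hq1 x hx 1
    simpa [hb_def] using h
  have hqc : qCos q x = ∑' n, a n := rfl
  have hqs : qSin q x = ∑' n, b n := rfl
  have hCos : HasSum (fun n => ∑ k ∈ Finset.range (n + 1), a k * a (n - k)) (qCos q x ^ 2) := by
    have h := hasSum_sum_range_mul_of_summable_norm hsa hsa
    rw [← hqc, ← pow_two] at h
    exact h
  have hSin : HasSum (fun n => ∑ k ∈ Finset.range (n + 1), b k * b (n - k)) (qSin q x ^ 2) := by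
    have h := hasSum_sum_range_mul_of_summable_norm hsb hsb
    rw [← hqs, ← pow_two] at h
    exact h
  set f : ℕ → ℂ := fun n =>
    if n = 0 then 0 else ∑ k ∈ Finset.range ((n - 1) + 1), b k * b ((n - 1) - k) with hf_def
  have hf1 : (fun n => f (n + 1)) = fun n => ∑ k ∈ Finset.range (n + 1), b k * b (n - k) := by
    funext n; simp [hf_def]
  have hSin' : HasSum f (qSin q x ^ 2) := by
    have h := HasSum.zero_add (f := f) (by rw [hf1]; exact hSin)
    simpa [hf_def] using h
  have hMain := hCos.sub hSin'
  have hfun : (fun n : ℕ =>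
        (-1 : ℂ) ^ n * qAddPow q 1 1 (2 * n) * x ^ (2 * n) / (qFact q (2 * n) : ℂ)) =
      fun n => (∑ k ∈ Finset.range (n + 1), a k * a (n - k)) - f n := by
    funext n
    cases n with
    | zero =>
      norm_num [qAddPow, qBinom, qFact, hf_def, ha_def]
    | succ m =>
      have hfm : f (m + 1) = ∑ k ∈ Finset.range (m + 1), b k * b (m - k) := by
        simp [hf_def]
      rw [hfm]
      have hAdd : qAddPow q 1 1 (2 * (m + 1)) =
          ∑ k ∈ Finset.range (2 * (m + 1) + 1), ((qBinom q (2 * (m + 1)) k : ℝ) : ℂ) := by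
        simp [qAddPow]
      rw [hAdd]
      have hsum : (-1 : ℂ) ^ (m + 1) *
            (∑ k ∈ Finset.range (2 * (m + 1) + 1), ((qBinom q (2 * (m + 1)) k : ℝ) : ℂ)) *
            x ^ (2 * (m + 1)) / (qFact q (2 * (m + 1)) : ℂ) =
          ∑ k ∈ Finset.range (2 * (m + 1) + 1),
            (-1 : ℂ) ^ (m + 1) * ((qBinom q (2 * (m + 1)) k : ℝ) : ℂ) *
              x ^ (2 * (m + 1)) / (qFact q (2 * (m + 1)) : ℂ) := by
        rw [Finset.mul_sum, Finset.sum_mul, Finset.sum_div]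
      rw [hsum, sum_range_even_odd]
      have hE : ∑ i ∈ Finset.range (m + 1 + 1),
          (-1 : ℂ) ^ (m + 1) * ((qBinom q (2 * (m + 1)) (2 * i) : ℝ) : ℂ) *
            x ^ (2 * (m + 1)) / (qFact q (2 * (m + 1)) : ℂ) =
          ∑ k ∈ Finset.range (m + 1 + 1), a k * a (m + 1 - k) := by
        refine Finset.sum_congr rfl fun i hi => ?_
        have hi' : i ≤ m + 1 := by
          have := Finset.mem_range.mp hi; omega
        have hb := qBinom_div_cast hq0 hq1 (2 * (m + 1)) (2 * i)
        have hsub : 2 * (m + 1) - 2 * i = 2 * (m + 1 - i) := by omega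
        rw [hsub] at hb
        have e2 : (-1 : ℂ) ^ i * (-1 : ℂ) ^ (m + 1 - i) = (-1 : ℂ) ^ (m + 1) := by
          rw [← pow_add]; congr 1; omega
        have e3 : x ^ (2 * i) * x ^ (2 * (m + 1 - i)) = x ^ (2 * (m + 1)) := by
          rw [← pow_add]; congr 1; omega
        calc (-1 : ℂ) ^ (m + 1) * ((qBinom q (2 * (m + 1)) (2 * i) : ℝ) : ℂ) *
              x ^ (2 * (m + 1)) / (qFact q (2 * (m + 1)) : ℂ)
            = (-1 : ℂ) ^ (m + 1) * x ^ (2 * (m + 1)) *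
              (((qBinom q (2 * (m + 1)) (2 * i) : ℝ) : ℂ) / (qFact q (2 * (m + 1)) : ℂ)) := by
              ring
          _ = (-1 : ℂ) ^ (m + 1) * x ^ (2 * (m + 1)) *
              (1 / ((qFact q (2 * i) : ℂ) * (qFact q (2 * (m + 1 - i)) : ℂ))) := by rw [hb]
          _ = a i * a (m + 1 - i) := by
              simp only [ha_def]
              rw [div_mul_div_comm,
                show (-1 : ℂ) ^ i * x ^ (2 * i) * ((-1 : ℂ) ^ (m + 1 - i) * x ^ (2 * (m + 1 - i)))
                  = (-1 : ℂ) ^ (m + 1) * x ^ (2 * (m + 1)) from by rw [← e2, ← e3]; ring]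
              ring
      have hO : ∑ i ∈ Finset.range (m + 1),
          (-1 : ℂ) ^ (m + 1) * ((qBinom q (2 * (m + 1)) (2 * i + 1) : ℝ) : ℂ) *
            x ^ (2 * (m + 1)) / (qFact q (2 * (m + 1)) : ℂ) =
          -∑ k ∈ Finset.range (m + 1), b k * b (m - k) := by
        rw [← Finset.sum_neg_distrib]
        refine Finset.sum_congr rfl fun i hi => ?_
        have hi' : i ≤ m := by
          have := Finset.mem_range.mp hi; omega
        have hb := qBinom_div_cast hq0 hq1 (2 * (m + 1)) (2 * i + 1)
        have hsub : 2 * (m + 1) - (2 * i + 1) = 2 * (m - i) + 1 := by omega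
        rw [hsub] at hb
        have e2 : (-1 : ℂ) ^ i * (-1 : ℂ) ^ (m - i) = (-1 : ℂ) ^ m := by
          rw [← pow_add]; congr 1; omega
        have e3 : x ^ (2 * i + 1) * x ^ (2 * (m - i) + 1) = x ^ (2 * (m + 1)) := by
          rw [← pow_add]; congr 1; omega
        calc (-1 : ℂ) ^ (m + 1) * ((qBinom q (2 * (m + 1)) (2 * i + 1) : ℝ) : ℂ) *
              x ^ (2 * (m + 1)) / (qFact q (2 * (m + 1)) : ℂ)
            = (-1 : ℂ) ^ (m + 1) * x ^ (2 * (m + 1)) *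
              (((qBinom q (2 * (m + 1)) (2 * i + 1) : ℝ) : ℂ) / (qFact q (2 * (m + 1)) : ℂ)) := by
              ring
          _ = (-1 : ℂ) ^ (m + 1) * x ^ (2 * (m + 1)) *
              (1 / ((qFact q (2 * i + 1) : ℂ) * (qFact q (2 * (m - i) + 1) : ℂ))) := by rw [hb]
          _ = -(b i * b (m - i)) := by
              simp only [hb_def]
              rw [div_mul_div_comm,
                show (-1 : ℂ) ^ i * x ^ (2 * i + 1) *
                    ((-1 : ℂ) ^ (m - i) * x ^ (2 * (m - i) + 1))
                  = (-1 : ℂ) ^ m * x ^ (2 * (m + 1)) from by rw [← e2, ← e3]; ring,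
                pow_succ]
              ring
      rw [hE, hO]
      ring
  rw [hfun]
  exact hMain
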